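/- In the middle order P_n, v is covered by w if and only if I(w) = I(v) + e_i for some standard basis vector e_i; equivalently, w is obtained from v by swapping a value i with the rightmost value j < i appearing to the left of i in v such that no value smaller than i lies between them. -/
import Mathlib


/-- The inversion sequence of a permutation `w` of `Fin n` (0-indexed values):
`invSeq w i` counts the values `j < i` appearing after `i` in one-line notation. -/
def invSeq {n : ℕ} (w : Equiv.Perm (Fin n)) (i : Fin n) : ℕ :=
  (Finset.univ.filter (fun j : Fin n => j < i ∧ w.symm i < w.symm j)).card

/-- The middle order on permutations: coordinate-wise comparison of inversion sequences. -/
def midLe {n : ℕ} (v w : Equiv.Perm (Fin n)) : Prop :=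
  ∀ i, invSeq v i ≤ invSeq w i

/-- `v` is covered by `w` in the middle order. -/
def midCovBy {n : ℕ} (v w : Equiv.Perm (Fin n)) : Prop :=
  midLe v w ∧ v ≠ w ∧ ∀ u, midLe v u → midLe u w → u = v ∨ u = w


open Finset Equiv

variable {n : ℕ}

lemma card_lt_eq (i : Fin n) : (univ.filter (fun j : Fin n => j < i)).card = i := by
  have : univ.filter (fun j : Fin n => j < i) = Finset.Iio i := by
    ext j; simp
  rw [this, Fin.card_Iio]

lemma invSeq_le (w : Equiv.Perm (Fin n)) (i : Fin n) : invSeq w i ≤ i := by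
  calc invSeq w i ≤ (univ.filter (fun j : Fin n => j < i)).card := by
        apply Finset.card_le_card
        intro x hx
        simp only [Finset.mem_filter] at *
        exact ⟨hx.1, hx.2.1⟩
    _ = i := card_lt_eq i

lemma invSeq_split (σ : Equiv.Perm (Fin n)) (i : Fin n) :
    invSeq σ i + (univ.filter (fun j : Fin n => i < j ∧ σ.symm i < σ.symm j)).card
      = (Finset.Ioi (σ.symm i)).card := by
  have hsplit : univ.filter (fun j : Fin n => σ.symm i < σ.symm j)
      = univ.filter (fun j : Fin n => j < i ∧ σ.symm i < σ.symm j)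
        ∪ univ.filter (fun j : Fin n => i < j ∧ σ.symm i < σ.symm j) := by
    ext j
    simp only [mem_filter, mem_union, mem_univ, true_and]
    constructor
    · intro h
      have hne : j ≠ i := by
        rintro rfl; exact lt_irrefl _ h
      rcases lt_or_gt_of_ne hne with h' | h'
      · exact Or.inl ⟨h', h⟩
      · exact Or.inr ⟨h', h⟩
    · rintro (⟨_, h⟩ | ⟨_, h⟩) <;> exact h
  have hdisj : Disjoint (univ.filter (fun j : Fin n => j < i ∧ σ.symm i < σ.symm j))
      (univ.filter (fun j : Fin n => i < j ∧ σ.symm i < σ.symm j)) := by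
    rw [Finset.disjoint_filter]
    rintro j _ ⟨h1, _⟩ ⟨h2, _⟩
    exact absurd h2 (not_lt_of_gt h1)
  have hcard : (univ.filter (fun j : Fin n => σ.symm i < σ.symm j)).card
      = (Finset.Ioi (σ.symm i)).card := by
    apply Finset.card_bij (fun j _ => σ.symm j)
    · intro a ha
      simp only [mem_filter] at ha
      exact Finset.mem_Ioi.2 ha.2
    · intro a _ b _ hab
      exact σ.symm.injective hab
    · intro b hb
      refine ⟨σ b, ?_, by simp⟩
      simp only [mem_filter, mem_univ, true_and, Equiv.symm_apply_apply]
      exact Finset.mem_Ioi.1 hb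
  rw [← hcard, hsplit, Finset.card_union_of_disjoint hdisj, invSeq]

lemma inj_core (v w : Equiv.Perm (Fin n)) (i : Fin n)
    (hagree : ∀ j, i < j → v.symm j = w.symm j)
    (heq : invSeq v i = invSeq w i)
    (hpq : v.symm i < w.symm i) : False := by
  set p := v.symm i with hp
  set q := w.symm i with hq
  set Bv := univ.filter (fun j : Fin n => i < j ∧ p < v.symm j) with hBv
  set Bw := univ.filter (fun j : Fin n => i < j ∧ q < w.symm j) with hBw
  set S := univ.filter (fun j : Fin n => i < j ∧ p < v.symm j ∧ v.symm j ≤ q) with hS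
  have h1 : invSeq v i + Bv.card = (Finset.Ioi p).card := invSeq_split v i
  have h2 : invSeq w i + Bw.card = (Finset.Ioi q).card := invSeq_split w i
  -- Bv = Bw' ∪ S where Bw' is Bw expressed via v
  have hBweq : Bw = univ.filter (fun j : Fin n => i < j ∧ q < v.symm j) := by
    apply Finset.filter_congr
    intro j _
    constructor
    · rintro ⟨h, h'⟩; exact ⟨h, by rwa [← hagree j h] at h'⟩
    · rintro ⟨h, h'⟩; exact ⟨h, by rwa [hagree j h] at h'⟩
  have hBvsplit : Bv.card = Bw.card + S.card := by
    rw [hBweq, hBv, hS]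
    rw [← Finset.card_union_of_disjoint]
    · congr 1
      ext j
      simp only [mem_filter, mem_union, mem_univ, true_and]
      constructor
      · rintro ⟨h, h'⟩
        rcases lt_or_ge q (v.symm j) with h'' | h''
        · exact Or.inl ⟨h, h''⟩
        · exact Or.inr ⟨h, h', h''⟩
      · rintro (⟨h, h'⟩ | ⟨h, h', _⟩)
        · exact ⟨h, lt_trans hpq h'⟩
        · exact ⟨h, h'⟩
    · rw [Finset.disjoint_filter]
      rintro j _ ⟨_, h1⟩ ⟨_, _, h2⟩
      exact absurd h2 (not_le_of_gt h1)
  -- Ioi p = Ioc p q ∪ Ioi q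
  have hIoi : (Finset.Ioi p).card = (Finset.Ioc p q).card + (Finset.Ioi q).card := by
    rw [← Finset.card_union_of_disjoint (by
      rw [Finset.disjoint_left]
      intro a ha hb
      simp only [Finset.mem_Ioc, Finset.mem_Ioi] at ha hb
      exact absurd hb (not_lt_of_ge ha.2))]
    congr 1
    ext x
    simp only [Finset.mem_Ioc, Finset.mem_Ioi, Finset.mem_union]
    constructor
    · intro h
      rcases le_or_gt x q with h' | h'
      · exact Or.inl ⟨h, h'⟩
      · exact Or.inr h'
    · rintro (⟨h, _⟩ | h)
      · exact h
      · exact lt_trans hpq h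
  -- so S.card = (Ioc p q).card
  have hScard : S.card = (Finset.Ioc p q).card := by omega
  -- but S injects into Ioc p q avoiding q
  have himg : S.image v.symm ⊂ Finset.Ioc p q := by
    constructor
    · intro x hx
      simp only [Finset.mem_image, hS, mem_filter, mem_univ, true_and] at hx
      obtain ⟨j, ⟨_, h1, h2⟩, rfl⟩ := hx
      exact Finset.mem_Ioc.2 ⟨h1, h2⟩
    · intro hsub
      have hqmem : q ∈ S.image v.symm := hsub (Finset.mem_Ioc.2 ⟨hpq, le_rfl⟩)
      simp only [Finset.mem_image, hS, mem_filter, mem_univ, true_and] at hqmem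
      obtain ⟨j, ⟨hij, _, _⟩, hjq⟩ := hqmem
      have : w.symm j = w.symm i := by rw [← hagree j hij, hjq]
      exact absurd (w.symm.injective this) (ne_of_gt hij)
  have hlt : S.card < (Finset.Ioc p q).card := by
    rw [← Finset.card_image_of_injective S v.symm.injective]
    exact Finset.card_lt_card himg
  omega

lemma invSeq_injective (v w : Equiv.Perm (Fin n)) (h : ∀ i, invSeq v i = invSeq w i) : v = w := by
  by_contra hne
  have hsne : v.symm ≠ w.symm := fun hc => hne (by
    have := congrArg Equiv.symm hc
    simpa using this)
  have : ∃ i, v.symm i ≠ w.symm i := by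
    by_contra hc
    push_neg at hc
    exact hsne (Equiv.ext hc)
  set T := univ.filter (fun i : Fin n => v.symm i ≠ w.symm i) with hT
  have hTne : T.Nonempty := by
    obtain ⟨i, hi⟩ := this
    exact ⟨i, by simp [hT, hi]⟩
  set i := T.max' hTne with hi
  have himem : v.symm i ≠ w.symm i := by
    have := T.max'_mem hTne
    simp only [hT, mem_filter] at this
    exact this.2
  have hagree : ∀ j, i < j → v.symm j = w.symm j := by
    intro j hj
    by_contra hc
    have : j ∈ T := by simp [hT, hc]
    exact absurd (T.le_max' j this) (not_le_of_gt hj)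
  rcases lt_or_gt_of_ne himem with hlt | hlt
  · exact inj_core v w i hagree (h i) hlt
  · exact inj_core w v i (fun j hj => (hagree j hj).symm) (h i).symm hlt

def toInvVec (w : Equiv.Perm (Fin n)) : ∀ i : Fin n, Fin (i + 1) :=
  fun i => ⟨invSeq w i, Nat.lt_succ_of_le (invSeq_le w i)⟩

lemma toInvVec_bij : Function.Bijective (toInvVec (n := n)) := by
  rw [Fintype.bijective_iff_injective_and_card]
  constructor
  · intro v w h
    apply invSeq_injective
    intro i
    exact congrArg Fin.val (congrFun h i)
  · rw [Fintype.card_perm, Fintype.card_pi]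
    simp only [Fintype.card_fin]
    rw [Fin.prod_univ_eq_prod_range (fun i => i + 1) n]
    exact (Finset.prod_range_add_one_eq_factorial n).symm

lemma invSeq_surj (a : ∀ i : Fin n, Fin (i + 1)) :
    ∃ u : Equiv.Perm (Fin n), ∀ i, invSeq u i = a i := by
  obtain ⟨u, hu⟩ := toInvVec_bij.2 a
  exact ⟨u, fun i => congrArg Fin.val (congrFun hu i)⟩

lemma part1 (v w : Equiv.Perm (Fin n)) :
    midCovBy v w ↔ ∃ i : Fin n, ∀ j : Fin n,
      invSeq w j = invSeq v j + (if j = i then 1 else 0) := by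
  constructor
  · rintro ⟨h1, h2, h3⟩
    have hex : ∃ i, invSeq v i < invSeq w i := by
      by_contra hc
      push_neg at hc
      exact h2 (invSeq_injective v w (fun i => le_antisymm (h1 i) (hc i)))
    obtain ⟨i, hi⟩ := hex
    obtain ⟨u, hu⟩ := invSeq_surj (fun k =>
      (⟨invSeq v k + (if k = i then 1 else 0), by
        split_ifs with h
        · subst h
          exact Nat.lt_succ_of_le (le_trans hi (invSeq_le w k))
        · exact Nat.lt_succ_of_le (Nat.le_of_lt_succ (Nat.lt_succ_of_le
            ((Nat.add_zero _) ▸ invSeq_le v k)))⟩ : Fin (k + 1)))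
    simp only at hu
    have hvu : midLe v u := fun k => by rw [hu k]; exact Nat.le_add_right _ _
    have huw : midLe u w := fun k => by
      rw [hu k]
      split_ifs with h
      · subst h; omega
      · simpa using h1 k
    rcases h3 u hvu huw with rfl | rfl
    · have := hu i
      simp at this
    · exact ⟨i, hu⟩
  · rintro ⟨i, h⟩
    refine ⟨fun j => by rw [h j]; exact Nat.le_add_right _ _, ?_, ?_⟩
    · rintro rfl
      have := h i
      simp at this
    · intro u hvu huw
      have hne : ∀ j, j ≠ i → invSeq u j = invSeq v j := by
        intro j hj
        have h1 := huw j
        rw [h j, if_neg hj] at h1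
        exact le_antisymm (by simpa using h1) (hvu j)
      have h2 := huw i
      rw [h i, if_pos rfl] at h2
      rcases eq_or_lt_of_le h2 with h2 | h2
      · right
        apply invSeq_injective
        intro j
        rw [h j]
        by_cases hj : j = i
        · subst hj; simpa using h2
        · rw [if_neg hj]
          simpa using hne j hj
      · left
        apply invSeq_injective
        intro j
        by_cases hj : j = i
        · subst hj
          have := hvu j
          omega
        · exact hne j hj

lemma swap_invSeq (v : Equiv.Perm (Fin n)) (i j : Fin n) (hji : j < i)
    (hpos : v.symm j < v.symm i)
    (hbet : ∀ k : Fin n, k < i → v.symm j < v.symm k → v.symm k < v.symm i → False) :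
    ∀ m, invSeq (Equiv.swap i j * v) m = invSeq v m + (if m = i then 1 else 0) := by
  have hij : i ≠ j := ne_of_gt hji
  have hsymm : ∀ x, (Equiv.swap i j * v).symm x = v.symm (Equiv.swap i j x) := fun x => rfl
  have fact1 : ∀ l, l ≠ i → l ≠ j → l < i → (v.symm j < v.symm l ↔ v.symm i < v.symm l) := by
    intro l hli hlj hl
    constructor
    · intro h
      by_contra hc
      have : v.symm l < v.symm i :=
        lt_of_le_of_ne (le_of_not_gt hc) (fun hc' => hli (v.symm.injective hc'))
      exact hbet l hl h this
    · intro h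
      exact lt_trans hpos h
  have fact2 : ∀ m, m ≠ i → m ≠ j → m < i → (v.symm m < v.symm i ↔ v.symm m < v.symm j) := by
    intro m hmi hmj hm
    constructor
    · intro h
      by_contra hc
      have : v.symm j < v.symm m :=
        lt_of_le_of_ne (le_of_not_gt hc) (fun hc' => hmj (v.symm.injective hc'.symm))
      exact hbet m hm this h
    · intro h
      exact lt_trans h hpos
  intro m
  unfold invSeq
  by_cases hmi : m = i
  · -- m = i : count goes up by one (value j joins the set)
    subst hmi
    rw [if_pos rfl]
    have hset : univ.filter (fun l : Fin n => l < m ∧ (Equiv.swap m j * v).symm m < (Equiv.swap m j * v).symm l)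
        = insert j (univ.filter (fun l : Fin n => l < m ∧ v.symm m < v.symm l)) := by
      ext l
      simp only [mem_filter, mem_insert, mem_univ, true_and, hsymm, Equiv.swap_apply_left]
      by_cases hlj : l = j
      · subst hlj
        simp [Equiv.swap_apply_right, hji, hpos]
      · by_cases hlm : l = m
        · subst hlm
          simp [lt_irrefl, hlj]
        · rw [Equiv.swap_apply_of_ne_of_ne hlm hlj]
          constructor
          · rintro ⟨h1, h2⟩
            exact Or.inr ⟨h1, (fact1 l hlm hlj h1).1 h2⟩
          · rintro (h | ⟨h1, h2⟩)
            · exact absurd h hlj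
            · exact ⟨h1, (fact1 l hlm hlj h1).2 h2⟩
    rw [hset, Finset.card_insert_of_notMem]
    simp only [mem_filter, mem_univ, true_and, not_and]
    intro _
    exact asymm hpos
  · rw [if_neg hmi, Nat.add_zero]
    by_cases hmlt : m < i
    · -- m < i, m ≠ i, maybe m = j or not; value m's count unchanged
      congr 1
      apply Finset.filter_congr
      intro l _
      by_cases hlm : l < m
      · simp only [hlm, true_and, hsymm]
        have hli : l ≠ i := ne_of_lt (lt_trans hlm hmlt)
        by_cases hmj : m = j
        · -- m = j : w.symm m = v.symm i
          subst hmj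
          have hlj : l ≠ m := ne_of_lt hlm
          rw [Equiv.swap_apply_right, Equiv.swap_apply_of_ne_of_ne hli hlj]
          exact (fact1 l hli hlj (lt_trans hlm hmlt)).symm
        · by_cases hlj : l = j
          · subst hlj
            rw [Equiv.swap_apply_right, Equiv.swap_apply_of_ne_of_ne hmi hmj]
            exact fact2 m hmi hmj hmlt
          · rw [Equiv.swap_apply_of_ne_of_ne hli hlj, Equiv.swap_apply_of_ne_of_ne hmi hmj]
      · simp [hlm]
    · -- i < m : bijection via swap
      have him : i < m := lt_of_le_of_ne (le_of_not_gt hmlt) (Ne.symm hmi)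
      have hjm : j < m := lt_trans hji him
      have hswaplt : ∀ l : Fin n, l < m → Equiv.swap i j l < m := by
        intro l hl
        by_cases h1 : l = i
        · subst h1; rw [Equiv.swap_apply_left]; exact hjm
        · by_cases h2 : l = j
          · subst h2; rw [Equiv.swap_apply_right]; exact him
          · rw [Equiv.swap_apply_of_ne_of_ne h1 h2]; exact hl
      have hmj : m ≠ j := ne_of_gt hjm
      have hswapm : Equiv.swap i j m = m := Equiv.swap_apply_of_ne_of_ne hmi hmj
      have hset : univ.filter (fun l : Fin n => l < m ∧ (Equiv.swap i j * v).symm m < (Equiv.swap i j * v).symm l)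
          = (univ.filter (fun l : Fin n => l < m ∧ v.symm m < v.symm l)).image (Equiv.swap i j) := by
        ext l
        simp only [mem_filter, mem_univ, true_and, Finset.mem_image, hsymm, hswapm]
        constructor
        · rintro ⟨h1, h2⟩
          exact ⟨Equiv.swap i j l, ⟨hswaplt _ h1, h2⟩, Equiv.swap_apply_self i j l⟩
        · rintro ⟨a, ⟨ha1, ha2⟩, rfl⟩
          refine ⟨hswaplt _ ha1, ?_⟩
          rwa [Equiv.swap_apply_self]
      rw [hset, Finset.card_image_of_injective _ (Equiv.swap i j).injective]

lemma part2 (v w : Equiv.Perm (Fin n)) :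
    (∃ i : Fin n, ∀ j : Fin n, invSeq w j = invSeq v j + (if j = i then 1 else 0)) ↔
    (∃ i j : Fin n, j < i ∧ v.symm j < v.symm i ∧
      (∀ k : Fin n, k < i → v.symm j < v.symm k → v.symm k < v.symm i → False) ∧
      w = Equiv.swap i j * v) := by
  constructor
  · rintro ⟨i, h⟩
    have hi : invSeq v i < invSeq w i := by
      have := h i
      simp at this
      omega
    set S := univ.filter (fun j : Fin n => j < i ∧ v.symm j < v.symm i) with hS
    have hSne : S.Nonempty := by
      by_contra hc
      rw [Finset.not_nonempty_iff_eq_empty] at hc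
      have hall : ∀ j : Fin n, j < i → v.symm i < v.symm j := by
        intro j hj
        rcases lt_trichotomy (v.symm j) (v.symm i) with h' | h' | h'
        · have hjmem : j ∈ S := by
            rw [hS, mem_filter]
            exact ⟨mem_univ _, hj, h'⟩
          rw [hc] at hjmem
          exact absurd hjmem (Finset.notMem_empty j)
        · exact absurd (v.symm.injective h') (ne_of_lt hj)
        · exact h'
      have hvi : invSeq v i = i := by
        unfold invSeq
        rw [show (univ.filter (fun j : Fin n => j < i ∧ v.symm i < v.symm j))
            = univ.filter (fun j : Fin n => j < i) from
          Finset.filter_congr (fun j _ => ⟨fun hh => hh.1, fun hh => ⟨hh, hall j hh⟩⟩)]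
        exact card_lt_eq i
      have := invSeq_le w i
      omega
    obtain ⟨j, hjS, hjmax⟩ := Finset.exists_max_image S (fun j => v.symm j) hSne
    rw [hS, mem_filter] at hjS
    obtain ⟨-, hji, hpos⟩ := hjS
    have hbet : ∀ k : Fin n, k < i → v.symm j < v.symm k → v.symm k < v.symm i → False := by
      intro k hk h1 h2
      have hkS : k ∈ S := by
        rw [hS, mem_filter]
        exact ⟨mem_univ _, hk, h2⟩
      exact absurd h1 (not_lt_of_ge (hjmax k hkS))
    refine ⟨i, j, hji, hpos, hbet, ?_⟩
    apply invSeq_injective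
    intro k
    rw [h k, swap_invSeq v i j hji hpos hbet k]
  · rintro ⟨i, j, hji, hpos, hbet, rfl⟩
    exact ⟨i, swap_invSeq v i j hji hpos hbet⟩


/-- Covers in the middle order: `v ⋖ w` iff `I(w) = I(v) + e_i` for some `i`;
equivalently `w` is obtained from `v` by swapping a value `i` with the rightmost
value `j < i` to its left such that no value smaller than `i` lies between them. -/
theorem middle_order_covers (n : ℕ) (v w : Equiv.Perm (Fin n)) :
    (midCovBy v w ↔
      ∃ i : Fin n, ∀ j : Fin n,
        invSeq w j = invSeq v j + (if j = i then 1 else 0)) ∧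
    (midCovBy v w ↔
      ∃ i j : Fin n, j < i ∧ v.symm j < v.symm i ∧
        (∀ k : Fin n, k < i → v.symm j < v.symm k → v.symm k < v.symm i → False) ∧
        w = Equiv.swap i j * v) := by
  constructor
  · exact part1 v w
  · exact (part1 v w).trans (part2 v w)
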